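/- For every m ∈ ℕ and every x ∈ ℍ, Q_m(x) = −Δ(x^{m+2})/(2(m+1)(m+2)), where Δ = ∂²/∂x₀² + ∂²/∂x₁² + ∂²/∂x₂² + ∂²/∂x₃² is the four-dimensional Laplacian applied to the quaternionic power function x ↦ x^{m+2}. -/

import Mathlib

open Quaternion

noncomputable section

/-- The quaternion unit `e₁`. -/
def e1 : ℍ[ℝ] := ⟨0, 1, 0, 0⟩

/-- The quaternion unit `e₂`. -/
def e2 : ℍ[ℝ] := ⟨0, 0, 1, 0⟩

/-- The quaternion unit `e₃`. -/
def e3 : ℍ[ℝ] := ⟨0, 0, 0, 1⟩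

/-- The coefficients `T^m_j = 2(m-j+1)/((m+1)(m+2))`. -/
def appellT (m j : ℕ) : ℝ :=
  (2 * ((m : ℝ) - (j : ℝ) + 1)) / (((m : ℝ) + 1) * ((m : ℝ) + 2))

/-- The `m`-th quaternionic Appell polynomial
`Q_m(x) = Σ_{j=0}^m T^m_j x^{m-j} x̄^j`. -/
def appellQ (m : ℕ) (x : ℍ[ℝ]) : ℍ[ℝ] :=
  ∑ j ∈ Finset.range (m + 1), appellT m j • (x ^ (m - j) * (star x) ^ j)

/-- Second directional derivative of `f` along the direction `v`. -/
def dir2 (f : ℍ[ℝ] → ℍ[ℝ]) (v x : ℍ[ℝ]) : ℍ[ℝ] :=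
  fderiv ℝ (fun y => fderiv ℝ f y v) x v

/-- The four-dimensional Laplacian
`Δf = ∂²f/∂x₀² + ∂²f/∂x₁² + ∂²f/∂x₂² + ∂²f/∂x₃²`. -/
def quatLaplacian (f : ℍ[ℝ] → ℍ[ℝ]) (x : ℍ[ℝ]) : ℍ[ℝ] :=
  dir2 f 1 x + dir2 f e1 x + dir2 f e2 x + dir2 f e3 x

namespace AppellAux

open Finset ContinuousLinearMap

lemma comm_star (x : ℍ[ℝ]) : (star x) * x = x * (star x) := by
  ext <;> simp <;> ring

lemma quadId (q : ℍ[ℝ]) :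
    1 * q * 1 + e1 * q * e1 + e2 * q * e2 + e3 * q * e3 = (-2 : ℝ) • star q := by
  ext <;> simp [Quaternion.re_mul, Quaternion.imI_mul, Quaternion.imJ_mul,
    Quaternion.imK_mul] <;> simp [e1, e2, e3] <;> ring

/-- derivative CLM of `y ↦ y^n` at `x` -/
def Dp : ℕ → ℍ[ℝ] → (ℍ[ℝ] →L[ℝ] ℍ[ℝ])
  | 0, _ => 0
  | (n+1), x => x ^ n • ContinuousLinearMap.id ℝ ℍ[ℝ] + (Dp n x).smulRight x

lemma hasFDerivAt_qpow (n : ℕ) (x : ℍ[ℝ]) :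
    HasFDerivAt (fun y : ℍ[ℝ] => y ^ n) (Dp n x) x := by
  induction n with
  | zero => simpa [Dp] using (hasFDerivAt_const (1 : ℍ[ℝ]) x)
  | succ n ih =>
      have h := ih.mul' (hasFDerivAt_id x)
      have he : (fun y : ℍ[ℝ] => y ^ (n+1)) = fun y => y ^ n * y := by
        funext y; rw [pow_succ]
      rw [he]
      exact h

lemma Dp_apply (n : ℕ) (x v : ℍ[ℝ]) :
    Dp n x v = ∑ i ∈ range n, x ^ i * v * x ^ (n - 1 - i) := by
  induction n with
  | zero => simp [Dp]
  | succ n ih =>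
      have h : Dp (n+1) x v = x ^ n * v + (Dp n x v) * x := by
        simp [Dp, smul_eq_mul]
      rw [h, ih, sum_mul, sum_range_succ, add_comm]
      congr 1
      · apply sum_congr rfl
        intro i hi
        rw [mem_range] at hi
        rw [mul_assoc (x ^ i * v), ← pow_succ]
        congr 2
        omega
      · simp

lemma dir2_qpow (n : ℕ) (v x : ℍ[ℝ]) :
    dir2 (fun y => y ^ n) v x =
      ∑ i ∈ range n, ((x ^ i * v) * (∑ b ∈ range (n-1-i), x ^ b * v * x ^ (n-1-i-1-b))
        + ((∑ a ∈ range i, x ^ a * v * x ^ (i-1-a)) * v) * x ^ (n-1-i)) := by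
  have hfun : (fun y => fderiv ℝ (fun z : ℍ[ℝ] => z ^ n) y v)
      = fun y => ∑ i ∈ range n, y ^ i * v * y ^ (n - 1 - i) := by
    funext y
    rw [(hasFDerivAt_qpow n y).fderiv, Dp_apply]
  have hD : HasFDerivAt (fun y : ℍ[ℝ] => ∑ i ∈ range n, y ^ i * v * y ^ (n - 1 - i))
      (∑ i ∈ range n, ((x ^ i * v) • Dp (n-1-i) x
        + ((x ^ i • (0 : ℍ[ℝ] →L[ℝ] ℍ[ℝ]) + (Dp i x).smulRight v).smulRight (x ^ (n-1-i))))) x := by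
    apply HasFDerivAt.fun_sum
    intro i _
    exact ((hasFDerivAt_qpow i x).mul' (hasFDerivAt_const v x)).mul' (hasFDerivAt_qpow (n-1-i) x)
  rw [dir2, hfun, hD.fderiv]
  simp only [ContinuousLinearMap.sum_apply, ContinuousLinearMap.add_apply,
    ContinuousLinearMap.smul_apply, ContinuousLinearMap.smulRight_apply,
    ContinuousLinearMap.zero_apply, Dp_apply, smul_eq_mul, smul_zero, mul_zero, zero_add]

lemma dir2_qpow' (n : ℕ) (v x : ℍ[ℝ]) :
    dir2 (fun y => y ^ n) v x =
      (∑ i ∈ range n, ∑ b ∈ range (n-1-i), x^i * (v * x^b * v) * x^(n-1-i-1-b))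
    + (∑ i ∈ range n, ∑ a ∈ range i, x^a * (v * x^(i-1-a) * v) * x^(n-1-i)) := by
  rw [dir2_qpow, sum_add_distrib]
  congr 1
  · apply sum_congr rfl; intro i _
    rw [mul_sum]
    apply sum_congr rfl; intro b _
    noncomm_ring
  · apply sum_congr rfl; intro i _
    rw [sum_mul, sum_mul]
    apply sum_congr rfl; intro a _
    noncomm_ring

section counting

variable {M : Type*} [AddCommMonoid M]

lemma sum1 (N : ℕ) (G : ℕ → M) :
    ∑ i ∈ range (N+1), ∑ b ∈ range (N-i), G b = ∑ j ∈ range N, (N-j) • G j := by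
  induction N with
  | zero => simp
  | succ N ih =>
      have L : ∑ i ∈ range (N+2), ∑ b ∈ range (N+1-i), G b
          = (∑ j ∈ range N, (N-j) • G j) + ∑ j ∈ range (N+1), G j := by
        rw [sum_range_succ]
        simp only [Nat.sub_self, range_zero, sum_empty, add_zero]
        have : ∀ i ∈ range (N+1), ∑ b ∈ range (N+1-i), G b
            = (∑ b ∈ range (N-i), G b) + G (N-i) := by
          intro i hi
          rw [mem_range] at hi
          rw [show N+1-i = (N-i)+1 by omega, sum_range_succ]
        rw [sum_congr rfl this, sum_add_distrib, ih]
        congr 1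
        have h2 := sum_range_reflect G (N+1)
        rw [Nat.add_sub_cancel] at h2
        exact h2
      rw [L]
      have R : ∑ j ∈ range (N+1), (N+1-j) • G j
          = (∑ j ∈ range N, (N-j) • G j) + ∑ j ∈ range (N+1), G j := by
        have : ∀ j ∈ range (N+1), (N+1-j) • G j = (N-j) • G j + G j := by
          intro j hj
          rw [mem_range] at hj
          rw [show N+1-j = (N-j)+1 by omega, succ_nsmul]
        rw [sum_congr rfl this, sum_add_distrib, sum_range_succ, Nat.sub_self, zero_smul,
          add_zero]
      rw [R]

lemma sum2 (N : ℕ) (G : ℕ → M) :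
    ∑ i ∈ range (N+1), ∑ a ∈ range i, G (i-1-a) = ∑ j ∈ range N, (N-j) • G j := by
  have h1 : ∀ i : ℕ, ∑ a ∈ range i, G (i-1-a) = ∑ a ∈ range i, G a := fun i =>
    sum_range_reflect G i
  calc ∑ i ∈ range (N+1), ∑ a ∈ range i, G (i-1-a)
      = ∑ i ∈ range (N+1), ∑ a ∈ range i, G a :=
        sum_congr rfl fun i _ => h1 i
    _ = ∑ i ∈ range (N+1), ∑ a ∈ range (N+1-1-i), G a := by
        rw [← sum_range_reflect (fun i => ∑ a ∈ range i, G a) (N+1)]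
    _ = ∑ j ∈ range N, (N-j) • G j := by
        simp only [Nat.add_sub_cancel]
        exact sum1 N G

end counting

lemma key (x : ℍ[ℝ]) (α β γ : ℕ) :
    x^α * (1 * x^β * 1) * x^γ + x^α * (e1 * x^β * e1) * x^γ
      + x^α * (e2 * x^β * e2) * x^γ + x^α * (e3 * x^β * e3) * x^γ
    = (-2:ℝ) • (x^(α+γ) * (star x)^β) := by
  have h : x^α * (1*x^β*1 + e1*x^β*e1 + e2*x^β*e2 + e3*x^β*e3) * x^γ
      = (-2:ℝ) • (x^(α+γ) * (star x)^β) := by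
    rw [quadId, star_pow, mul_smul_comm, smul_mul_assoc]
    congr 1
    have hc : Commute ((star x)^β) (x^γ) := Commute.pow_pow (comm_star x) β γ
    rw [mul_assoc, hc.eq, ← mul_assoc, ← pow_add]
  rw [← h]
  noncomm_ring

lemma Apart (m : ℕ) (x : ℍ[ℝ]) :
    ((∑ i ∈ range (m+2), ∑ b ∈ range (m+2-1-i), x^i * ((1:ℍ[ℝ]) * x^b * 1) * x^(m+2-1-i-1-b))
     + (∑ i ∈ range (m+2), ∑ b ∈ range (m+2-1-i), x^i * (e1 * x^b * e1) * x^(m+2-1-i-1-b))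
     + (∑ i ∈ range (m+2), ∑ b ∈ range (m+2-1-i), x^i * (e2 * x^b * e2) * x^(m+2-1-i-1-b))
     + (∑ i ∈ range (m+2), ∑ b ∈ range (m+2-1-i), x^i * (e3 * x^b * e3) * x^(m+2-1-i-1-b)))
    = ∑ j ∈ range (m+1), (m+1-j) • ((-2:ℝ) • (x^(m-j) * (star x)^j)) := by
  rw [← sum_add_distrib, ← sum_add_distrib, ← sum_add_distrib]
  have step : ∀ i ∈ range (m+2),
      ((∑ b ∈ range (m+2-1-i), x^i * ((1:ℍ[ℝ]) * x^b * 1) * x^(m+2-1-i-1-b))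
       + (∑ b ∈ range (m+2-1-i), x^i * (e1 * x^b * e1) * x^(m+2-1-i-1-b))
       + (∑ b ∈ range (m+2-1-i), x^i * (e2 * x^b * e2) * x^(m+2-1-i-1-b))
       + (∑ b ∈ range (m+2-1-i), x^i * (e3 * x^b * e3) * x^(m+2-1-i-1-b)))
      = ∑ b ∈ range (m+2-1-i), (-2:ℝ) • (x^(m-b) * (star x)^b) := by
    intro i hi
    rw [mem_range] at hi
    rw [← sum_add_distrib, ← sum_add_distrib, ← sum_add_distrib]
    refine sum_congr rfl fun b hb => ?_
    rw [mem_range] at hb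
    rw [key x i b (m+2-1-i-1-b), show i + (m+2-1-i-1-b) = m - b by omega]
  rw [sum_congr rfl step]
  exact sum1 (m+1) (fun j => (-2:ℝ) • (x^(m-j) * (star x)^j))

lemma Bpart (m : ℕ) (x : ℍ[ℝ]) :
    ((∑ i ∈ range (m+2), ∑ a ∈ range i, x^a * ((1:ℍ[ℝ]) * x^(i-1-a) * 1) * x^(m+2-1-i))
     + (∑ i ∈ range (m+2), ∑ a ∈ range i, x^a * (e1 * x^(i-1-a) * e1) * x^(m+2-1-i))
     + (∑ i ∈ range (m+2), ∑ a ∈ range i, x^a * (e2 * x^(i-1-a) * e2) * x^(m+2-1-i))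
     + (∑ i ∈ range (m+2), ∑ a ∈ range i, x^a * (e3 * x^(i-1-a) * e3) * x^(m+2-1-i)))
    = ∑ j ∈ range (m+1), (m+1-j) • ((-2:ℝ) • (x^(m-j) * (star x)^j)) := by
  rw [← sum_add_distrib, ← sum_add_distrib, ← sum_add_distrib]
  have step : ∀ i ∈ range (m+2),
      ((∑ a ∈ range i, x^a * ((1:ℍ[ℝ]) * x^(i-1-a) * 1) * x^(m+2-1-i))
       + (∑ a ∈ range i, x^a * (e1 * x^(i-1-a) * e1) * x^(m+2-1-i))
       + (∑ a ∈ range i, x^a * (e2 * x^(i-1-a) * e2) * x^(m+2-1-i))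
       + (∑ a ∈ range i, x^a * (e3 * x^(i-1-a) * e3) * x^(m+2-1-i)))
      = ∑ a ∈ range i, (-2:ℝ) • (x^(m-(i-1-a)) * (star x)^(i-1-a)) := by
    intro i hi
    rw [mem_range] at hi
    rw [← sum_add_distrib, ← sum_add_distrib, ← sum_add_distrib]
    refine sum_congr rfl fun a ha => ?_
    rw [mem_range] at ha
    rw [key x a (i-1-a) (m+2-1-i), show a + (m+2-1-i) = m - (i-1-a) by omega]
  rw [sum_congr rfl step]
  exact sum2 (m+1) (fun j => (-2:ℝ) • (x^(m-j) * (star x)^j))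

lemma lap_pow (m : ℕ) (x : ℍ[ℝ]) :
    quatLaplacian (fun y => y ^ (m+2)) x =
      ∑ j ∈ Finset.range (m+1), (m+1-j) • ((-4:ℝ) • (x^(m-j) * (star x)^j)) := by
  rw [quatLaplacian, dir2_qpow' (m+2) 1 x, dir2_qpow' (m+2) e1 x, dir2_qpow' (m+2) e2 x,
    dir2_qpow' (m+2) e3 x]
  have rearr : ∀ A1 B1 A2 B2 A3 B3 A4 B4 : ℍ[ℝ],
      (A1+B1)+(A2+B2)+(A3+B3)+(A4+B4) = (A1+A2+A3+A4)+(B1+B2+B3+B4) := by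
    intros; abel
  rw [rearr, Apart, Bpart, ← sum_add_distrib]
  refine sum_congr rfl fun j _ => ?_
  rw [← smul_add, ← add_smul, show (-2:ℝ) + -2 = -4 by norm_num]

end AppellAux

/-- For every `m` and every `x ∈ ℍ`, `Q_m(x) = -Δ(x^{m+2})/(2(m+1)(m+2))`. -/
theorem appellQ_eq_neg_laplacian_pow (m : ℕ) (x : ℍ[ℝ]) :
    appellQ m x =
      (-(2 * ((m : ℝ) + 1) * ((m : ℝ) + 2))⁻¹) •
        quatLaplacian (fun y => y ^ (m + 2)) x := by
  rw [AppellAux.lap_pow, Finset.smul_sum, appellQ]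
  refine Finset.sum_congr rfl fun j hj => ?_
  rw [Finset.mem_range] at hj
  have hj' : (((m+1-j : ℕ)) : ℝ) = (m:ℝ) + 1 - (j:ℝ) := by
    have h : j ≤ m + 1 := by omega
    push_cast [h]
    ring
  rw [← Nat.cast_smul_eq_nsmul ℝ, smul_smul, smul_smul, hj']
  congr 1
  rw [appellT]
  have h1 : (m:ℝ)+1 ≠ 0 := by positivity
  have h2 : (m:ℝ)+2 ≠ 0 := by positivity
  field_simp
  ring
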